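/- Let a,b,c ≥ 2, L = L(a,b,c), c⃗ the canonical element, and ω = c⃗ − (x₁ + x₂ + x₃) the dualizing element. Then for every y ∈ L exactly one of the following holds: y ≥ 0, or y ≤ c⃗ + ω. Equivalently: y is not ≥ 0 if and only if y ≤ c⃗ + ω (where u ≤ v means v − u lies in the positive cone generated by x₁,x₂,x₃). -/

import Mathlib

/-- The subgroup of relations defining L(a,b,c). -/
def LRel (a b c : ℕ) : AddSubgroup (ℤ × ℤ × ℤ) :=
  AddSubgroup.closure {((a : ℤ), -(b : ℤ), 0), ((0 : ℤ), (b : ℤ), -(c : ℤ))}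

/-- The rank-one abelian group L(a,b,c) on generators x₁,x₂,x₃ with a·x₁ = b·x₂ = c·x₃. -/
abbrev LGrp (a b c : ℕ) := (ℤ × ℤ × ℤ) ⧸ LRel a b c

def Lx1 (a b c : ℕ) : LGrp a b c := QuotientAddGroup.mk (1, 0, 0)
def Lx2 (a b c : ℕ) : LGrp a b c := QuotientAddGroup.mk (0, 1, 0)
def Lx3 (a b c : ℕ) : LGrp a b c := QuotientAddGroup.mk (0, 0, 1)

/-- Canonical element c⃗ = a·x₁. -/
def Lcan (a b c : ℕ) : LGrp a b c := (a : ℤ) • Lx1 a b c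

/-- Dualizing element ω = c⃗ − (x₁+x₂+x₃). -/
def Lomega (a b c : ℕ) : LGrp a b c :=
  Lcan a b c - (Lx1 a b c + Lx2 a b c + Lx3 a b c)

/-- Dominant element δ⃗ = c⃗ + 2ω. -/
def Ldelta (a b c : ℕ) : LGrp a b c := Lcan a b c + (2 : ℤ) • Lomega a b c

/-- The partial order on L given by the positive cone ℕx₁+ℕx₂+ℕx₃ : u ≤ v iff v−u ∈ ℕx₁+ℕx₂+ℕx₃. -/
def Lle (a b c : ℕ) (u v : LGrp a b c) : Prop :=
  ∃ n1 n2 n3 : ℕ,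
    v - u = (n1 : ℤ) • Lx1 a b c + (n2 : ℤ) • Lx2 a b c + (n3 : ℤ) • Lx3 a b c

lemma mem_LRel_iff (a b c : ℕ) (w : ℤ × ℤ × ℤ) :
    w ∈ LRel a b c ↔ ∃ s t : ℤ, w = (s * a, (t - s) * b, -(t * c)) := by
  constructor
  · intro hw
    induction hw using AddSubgroup.closure_induction with
    | mem x hx =>
      rcases hx with hx | hx
      · exact ⟨1, 0, by rw [hx]; simp⟩
      · exact ⟨0, 1, by rw [Set.mem_singleton_iff] at hx; rw [hx]; simp⟩
    | zero => exact ⟨0, 0, by simp; rfl⟩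
    | add x y hx hy ihx ihy =>
      obtain ⟨s, t, rfl⟩ := ihx
      obtain ⟨s', t', rfl⟩ := ihy
      refine ⟨s + s', t + t', ?_⟩
      simp only [Prod.mk_add_mk, Prod.mk.injEq]
      refine ⟨by ring, by ring, by ring⟩
    | neg x hx ihx =>
      obtain ⟨s, t, rfl⟩ := ihx
      refine ⟨-s, -t, ?_⟩
      simp only [Prod.neg_mk, Prod.mk.injEq]
      refine ⟨by ring, by ring, by ring⟩
  · rintro ⟨s, t, rfl⟩
    have h : ((s * a : ℤ), ((t - s) * b : ℤ), (-(t * c) : ℤ)) =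
        s • ((a : ℤ), -(b : ℤ), (0 : ℤ)) + t • ((0 : ℤ), (b : ℤ), -(c : ℤ)) := by
      simp only [Prod.smul_mk, smul_eq_mul, Prod.mk_add_mk, Prod.mk.injEq]
      refine ⟨by ring, by ring, by ring⟩
    rw [h]
    exact AddSubgroup.add_mem _
      (AddSubgroup.zsmul_mem _ (AddSubgroup.subset_closure (by simp)) s)
      (AddSubgroup.zsmul_mem _ (AddSubgroup.subset_closure (by simp)) t)

lemma key_iff (a b c : ℕ) (ha : 0 < a) (hb : 0 < b) (hc : 0 < c) (p q r : ℤ) :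
    (∃ (n1 n2 n3 : ℕ) (s t : ℤ),
        -p + (n1 : ℤ) = s * a ∧ -q + (n2 : ℤ) = (t - s) * b ∧ -r + (n3 : ℤ) = -(t * c)) ↔
    0 ≤ p + a * (q / b) + a * (r / c) := by
  have hb' : (0 : ℤ) < b := by exact_mod_cast hb
  have hc' : (0 : ℤ) < c := by exact_mod_cast hc
  constructor
  · rintro ⟨n1, n2, n3, s, t, h1, h2, h3⟩
    have hq : q = (n2 : ℤ) + (s - t) * b := by linarith
    have hr : r = (n3 : ℤ) + t * c := by linarith
    have hqd : q / b = (n2 : ℤ) / b + (s - t) := by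
      rw [hq, Int.add_mul_ediv_right _ _ (ne_of_gt hb')]
    have hrd : r / c = (n3 : ℤ) / c + t := by
      rw [hr, Int.add_mul_ediv_right _ _ (ne_of_gt hc')]
    have h2 : (0 : ℤ) ≤ (n2 : ℤ) / b := Int.ediv_nonneg (by positivity) (le_of_lt hb')
    have h3 : (0 : ℤ) ≤ (n3 : ℤ) / c := Int.ediv_nonneg (by positivity) (le_of_lt hc')
    have hp : p = (n1 : ℤ) - s * a := by linarith
    have : p + a * (q / b) + a * (r / c)
        = (n1 : ℤ) + a * ((n2 : ℤ) / b) + a * ((n3 : ℤ) / c) := by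
      rw [hp, hqd, hrd]; ring
    rw [this]
    have ha' : (0 : ℤ) ≤ a := by positivity
    positivity
  · intro h
    set k := q / b with hk
    set l := r / c with hl
    refine ⟨(p + a * (k + l)).toNat, (q % b).toNat, (r % c).toNat, k + l, l, ?_, ?_, ?_⟩
    · rw [Int.toNat_of_nonneg (by linarith)]; ring
    · rw [Int.toNat_of_nonneg (Int.emod_nonneg q (ne_of_gt hb'))]
      have := Int.emod_add_mul_ediv q b
      linarith
    · rw [Int.toNat_of_nonneg (Int.emod_nonneg r (ne_of_gt hc'))]
      have := Int.emod_add_mul_ediv r c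
      linarith

lemma Lle_mk_iff (a b c : ℕ) (ha : 0 < a) (hb : 0 < b) (hc : 0 < c) (u v : ℤ × ℤ × ℤ) :
    Lle a b c (QuotientAddGroup.mk u) (QuotientAddGroup.mk v) ↔
    0 ≤ (v.1 - u.1) + a * ((v.2.1 - u.2.1) / b) + a * ((v.2.2 - u.2.2) / c) := by
  rw [← key_iff a b c ha hb hc]
  unfold Lle
  have hmk : ∀ n1 n2 n3 : ℕ,
      (n1 : ℤ) • Lx1 a b c + (n2 : ℤ) • Lx2 a b c + (n3 : ℤ) • Lx3 a b c
        = QuotientAddGroup.mk ((n1 : ℤ), (n2 : ℤ), (n3 : ℤ)) := by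
    intro n1 n2 n3
    simp only [Lx1, Lx2, Lx3, ← QuotientAddGroup.mk_zsmul, ← QuotientAddGroup.mk_add]
    congr 1
    simp [Prod.ext_iff]
  constructor
  · rintro ⟨n1, n2, n3, h⟩
    rw [hmk, ← QuotientAddGroup.mk_sub] at h
    rw [QuotientAddGroup.eq] at h
    rw [mem_LRel_iff] at h
    obtain ⟨s, t, hst⟩ := h
    rw [Prod.ext_iff, Prod.ext_iff] at hst
    simp only [Prod.fst_add, Prod.fst_neg, Prod.snd_add, Prod.snd_neg, Prod.fst_sub,
      Prod.snd_sub] at hst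
    exact ⟨n1, n2, n3, s, t, hst.1, hst.2.1, hst.2.2⟩
  · rintro ⟨n1, n2, n3, s, t, h1, h2, h3⟩
    refine ⟨n1, n2, n3, ?_⟩
    rw [hmk, ← QuotientAddGroup.mk_sub, QuotientAddGroup.eq, mem_LRel_iff]
    refine ⟨s, t, ?_⟩
    rw [Prod.ext_iff, Prod.ext_iff]
    simp only [Prod.fst_add, Prod.fst_neg, Prod.snd_add, Prod.snd_neg, Prod.fst_sub,
      Prod.snd_sub]
    exact ⟨h1, h2, h3⟩

lemma neg_one_sub_ediv (b q : ℤ) (hb : 0 < b) : (-1 - q) / b = -(q / b) - 1 := by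
  have h := Int.emod_add_mul_ediv q b
  have h1 := Int.emod_nonneg q (ne_of_gt hb)
  have h2 := Int.emod_lt_of_pos q hb
  exact ((Int.ediv_emod_unique (a := -1 - q) (r := b - 1 - q % b) hb).mpr
    ⟨by linarith, by linarith, by linarith⟩).1

/-- L is almost linearly ordered: y is not ≥ 0 if and only if y ≤ c⃗ + ω. -/
theorem not_nonneg_iff_le_can_add_omega (a b c : ℕ) (ha : 2 ≤ a) (hb : 2 ≤ b) (hc : 2 ≤ c)
    (y : LGrp a b c) :
    ¬ Lle a b c 0 y ↔ Lle a b c y (Lcan a b c + Lomega a b c) := by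
  have ha0 : 0 < a := by omega
  have hb0 : 0 < b := by omega
  have hc0 : 0 < c := by omega
  have hb' : (0 : ℤ) < b := by exact_mod_cast hb0
  have hc' : (0 : ℤ) < c := by exact_mod_cast hc0
  induction y using QuotientAddGroup.induction_on with
  | H z =>
    have h0 : (0 : LGrp a b c) = QuotientAddGroup.mk ((0 : ℤ), (0 : ℤ), (0 : ℤ)) := rfl
    have hco : Lcan a b c + Lomega a b c
        = QuotientAddGroup.mk ((2 * a - 1 : ℤ), (-1 : ℤ), (-1 : ℤ)) := by
      simp only [Lcan, Lomega, Lx1, Lx2, Lx3, ← QuotientAddGroup.mk_zsmul,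
        ← QuotientAddGroup.mk_add, ← QuotientAddGroup.mk_sub]
      congr 1
      simp only [Prod.smul_mk, smul_eq_mul, Prod.mk_add_mk, Prod.mk_sub_mk, Prod.mk.injEq]
      refine ⟨by ring, by ring, by ring⟩
    rw [h0, hco, Lle_mk_iff a b c ha0 hb0 hc0, Lle_mk_iff a b c ha0 hb0 hc0]
    simp only
    have e1 : (-1 - z.2.1) / (b : ℤ) = -(z.2.1 / b) - 1 := neg_one_sub_ediv _ _ hb'
    have e2 : (-1 - z.2.2) / (c : ℤ) = -(z.2.2 / c) - 1 := neg_one_sub_ediv _ _ hc'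
    have ez1 : (z.2.1 - 0) / (b : ℤ) = z.2.1 / b := by rw [sub_zero]
    have ez2 : (z.2.2 - 0) / (c : ℤ) = z.2.2 / c := by rw [sub_zero]
    rw [ez1, ez2, e1, e2]
    constructor
    · intro h
      push_neg at h
      nlinarith
    · intro h h'
      nlinarith
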